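/- Let X be a reduced set of d > 1 distinct points in ℙⁿ (n ≥ 2). Then the points of X are collinear (all lie on one line) if and only if G(X) = d and M(X) = 1. -/

import Mathlib

open MvPolynomial

/-! ### Combinatorics of binomial expansions -/

/-- The largest `m` with `C(m,d) ≤ c` (for `c,d ≥ 1`); the leading term `k_d`
of the `d`-binomial expansion of `c`. -/
def maxBinom (c d : ℕ) : ℕ := Nat.findGreatest (fun m => Nat.choose m d ≤ c) (c + d)

lemma one_le_choose_maxBinom {c d : ℕ} (hc : c ≠ 0) (hd : d ≠ 0) :
    1 ≤ Nat.choose (maxBinom c d) d := by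
  have h : d ≤ maxBinom c d :=
    Nat.le_findGreatest (Nat.le_add_left d c)
      (by simpa [Nat.choose_self] using Nat.one_le_iff_ne_zero.mpr hc)
  exact Nat.choose_pos h

/-- Macaulay's function `c ↦ c^⟨d⟩`: if `c = C(k_d,d) + C(k_{d-1},d-1) + ⋯ + C(k_δ,δ)`
is the `d`-binomial expansion of `c`, then
`macaulayFun c d = C(k_d+1,d+1) + ⋯ + C(k_δ+1,δ+1)`; and `0^⟨d⟩ = c^⟨0⟩ = 0`. -/
def macaulayFun (c d : ℕ) : ℕ :=
  if h : c = 0 ∨ d = 0 then 0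
  else
    Nat.choose (maxBinom c d + 1) (d + 1) +
      macaulayFun (c - Nat.choose (maxBinom c d) d) (d - 1)
termination_by c
decreasing_by
  push_neg at h
  have h1 := one_le_choose_maxBinom h.1 h.2
  have h2 := Nat.pos_of_ne_zero h.1
  omega

/-- Green's function `c ↦ c_⟨d⟩`: if `c = C(k_d,d) + C(k_{d-1},d-1) + ⋯ + C(k_δ,δ)`
is the `d`-binomial expansion of `c`, then
`greenFun c d = C(k_d-1,d) + ⋯ + C(k_δ-1,δ)` (with `C(i,j) = 0` for `i < j`);
and `0_⟨d⟩ = c_⟨0⟩ = 0`. -/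
def greenFun (c d : ℕ) : ℕ :=
  if h : c = 0 ∨ d = 0 then 0
  else
    Nat.choose (maxBinom c d - 1) d +
      greenFun (c - Nat.choose (maxBinom c d) d) (d - 1)
termination_by c
decreasing_by
  push_neg at h
  have h1 := one_le_choose_maxBinom h.1 h.2
  have h2 := Nat.pos_of_ne_zero h.1
  omega

/-- The list `[k_d, k_{d-1}, …, k_δ]` of the `d`-binomial expansion of `c`. -/
def binExpand (c d : ℕ) : List ℕ :=
  if h : c = 0 ∨ d = 0 then []
  else maxBinom c d :: binExpand (c - Nat.choose (maxBinom c d) d) (d - 1)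
termination_by c
decreasing_by
  push_neg at h
  have h1 := one_le_choose_maxBinom h.1 h.2
  have h2 := Nat.pos_of_ne_zero h.1
  omega

/-- The Macaulay difference list `(a_d, a_{d-1}, …, a_δ)` of `c` in degree `d`,
where `a_i = k_i - i` for the `d`-binomial expansion `c = Σ C(k_i, i)`. -/
def diffList (c d : ℕ) : List ℕ :=
  List.zipWith (fun m i => m - i) (binExpand c d) ((List.range (d + 1)).reverse)

/-- `gotzmannCoeffAux c d ℓ` is the number of entries of the Macaulay difference list
of `c` in degree `d` which are equal to `ℓ`; for `c = H_X(d)` this is `C_ℓ(X,d)`. -/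
def gotzmannCoeffAux (c d ℓ : ℕ) : ℕ := (diffList c d).count ℓ

/-! ### Hilbert functions of subschemes of projective space -/

/-- The homogeneous coordinate ring `R = k[x_0,…,x_n]` of `ℙⁿ`. -/
abbrev PR (k : Type) [Field k] (n : ℕ) := MvPolynomial (Fin (n + 1)) k

/-- The degree-`d` graded component of an ideal `I ⊆ k[x_0,…,x_n]`,
as a `k`-subspace of the polynomial ring. -/
noncomputable def idealComp {k : Type} [Field k] {n : ℕ} (I : Ideal (PR k n)) (d : ℕ) :
    Submodule k (PR k n) :=
  Submodule.restrictScalars k I ⊓ homogeneousSubmodule (Fin (n + 1)) k d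

/-- The Hilbert function of `R/I`: `hilb I d = dim_k R_d - dim_k I_d`. -/
noncomputable def hilb {k : Type} [Field k] {n : ℕ} (I : Ideal (PR k n)) (d : ℕ) : ℕ :=
  Module.finrank k (homogeneousSubmodule (Fin (n + 1)) k d) -
    Module.finrank k (idealComp I d)

/-- First difference `ΔH(d) = H(d) - H(d-1)` of the Hilbert function of `R/I`. -/
noncomputable def deltaH {k : Type} [Field k] {n : ℕ} (I : Ideal (PR k n)) (d : ℕ) : ℕ :=
  hilb I d - hilb I (d - 1)

/-- An ideal is homogeneous if it contains all homogeneous components of its elements. -/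
def IsHomog {k : Type} [Field k] {n : ℕ} (I : Ideal (PR k n)) : Prop :=
  ∀ f ∈ I, ∀ d : ℕ, MvPolynomial.homogeneousComponent d f ∈ I

/-- The irrelevant maximal ideal `(x_0, …, x_n)`. -/
noncomputable def irrel (k : Type) [Field k] (n : ℕ) : Ideal (PR k n) :=
  Ideal.span (Set.range MvPolynomial.X)

/-- The saturation `I^sat = ⋃_m (I : (x_0,…,x_n)^m)` of an ideal `I`. -/
noncomputable def satur {k : Type} [Field k] {n : ℕ} (I : Ideal (PR k n)) : Ideal (PR k n) :=
  ⨆ m : ℕ, Submodule.colon I ((irrel k n ^ m : Ideal (PR k n)) : Set (PR k n))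

/-- The saturation degree `sat(I)`: the least `r` with `I_j = (I^sat)_j` for all `j ≥ r`. -/
noncomputable def satDeg {k : Type} [Field k] {n : ℕ} (I : Ideal (PR k n)) : ℕ :=
  sInf {r : ℕ | ∀ j ≥ r, idealComp I j = idealComp (satur I) j}

/-- The Gotzmann number (persistence index) `G`: the least `d ≥ 1` such that the Hilbert
function of `R/I` has maximal growth `H(t+1) = H(t)^⟨t⟩` in every degree `t ≥ d`. -/
noncomputable def Gnum {k : Type} [Field k] {n : ℕ} (I : Ideal (PR k n)) : ℕ :=
  sInf {d : ℕ | 1 ≤ d ∧ ∀ t ≥ d, hilb I (t + 1) = macaulayFun (hilb I t) t}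

/-- The invariant `M`: the least `d ≥ 1` such that equality `ΔH(t) = H(t)_⟨t⟩`
in Green's Hyperplane Restriction Theorem holds for every degree `t ≥ d`. -/
noncomputable def Mnum {k : Type} [Field k] {n : ℕ} (I : Ideal (PR k n)) : ℕ :=
  sInf {d : ℕ | 1 ≤ d ∧ ∀ t ≥ d, deltaH I t = greenFun (hilb I t) t}

/-- The `ℓ`-th Gotzmann coefficient `C_ℓ(X)` of the subscheme defined by `I`: the number of
entries equal to `ℓ` in the (stable) Macaulay difference list of `H_X(d)`, `d ≥ G(X)`. -/
noncomputable def gotzmannCoeff {k : Type} [Field k] {n : ℕ} (I : Ideal (PR k n)) (ℓ : ℕ) : ℕ :=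
  gotzmannCoeffAux (hilb I (Gnum I + 1)) (Gnum I + 1) ℓ

/-- `X` is a hypersurface in a linear subspace of `ℙⁿ`:
`I_X = (L_1,…,L_c,F)` for linearly independent linear forms `L_i` and a form `F` of
positive degree which is a nonzerodivisor modulo `(L_1,…,L_c)`. -/
def IsHypersurfaceInLinearSubspace {k : Type} [Field k] {n : ℕ} (I : Ideal (PR k n)) : Prop :=
  ∃ (c : ℕ) (L : Fin c → PR k n) (F : PR k n) (e : ℕ),
    (∀ i, (L i).IsHomogeneous 1) ∧ LinearIndependent k L ∧
    0 < e ∧ F.IsHomogeneous e ∧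
    (∀ g : PR k n, F * g ∈ Ideal.span (Set.range L) → g ∈ Ideal.span (Set.range L)) ∧
    I = Ideal.span (Set.range L ∪ {F})

/-- Equidimensionality: all minimal primes of `I` have quotient of the same Krull dimension. -/
def IsEquidim {k : Type} [Field k] {n : ℕ} (I : Ideal (PR k n)) : Prop :=
  ∀ p ∈ I.minimalPrimes, ∀ q ∈ I.minimalPrimes,
    ringKrullDim (PR k n ⧸ p) = ringKrullDim (PR k n ⧸ q)

/-- The (affine cone) vanishing ideal of a subset of `k^{n+1}`. -/
def vanishIdeal {k : Type} [Field k] {n : ℕ} (S : Set (Fin (n + 1) → k)) : Ideal (PR k n) where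
  carrier := {f | ∀ x ∈ S, MvPolynomial.eval x f = 0}
  add_mem' := by
    intro f g hf hg x hx
    simp [map_add, hf x hx, hg x hx]
  zero_mem' := by intro x hx; simp
  smul_mem' := by
    intro c f hf x hx
    simp [smul_eq_mul, hf x hx]

/-- The affine cone over the (finite) set of points of `ℙⁿ` with homogeneous
coordinate vectors `v j`. -/
def coneOver {k : Type} [Field k] {n : ℕ} {s : ℕ} (v : Fin s → (Fin (n + 1) → k))
    (T : Set (Fin s)) : Set (Fin (n + 1) → k) :=
  {x | ∃ j ∈ T, ∃ t : k, x = t • v j}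

/-- The linear form with coefficient vector `v`. -/
noncomputable def linForm {k : Type} [Field k] {n : ℕ} (v : Fin (n + 1) → k) : PR k n :=
  ∑ j, MvPolynomial.C (v j) * MvPolynomial.X j

/-- `GenericProp k n ℓ Q` : the property `Q` holds for all tuples of `ℓ` (coefficient vectors
of) linear forms in a suitable nonempty Zariski-open subset of `(R_1)^ℓ`, i.e. on a nonempty
basic open set: the nonvanishing locus of a nonzero polynomial in the coefficients. -/
def GenericProp (k : Type) [Field k] (n ℓ : ℕ) (Q : (Fin ℓ → Fin (n + 1) → k) → Prop) : Prop :=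
  ∃ F : MvPolynomial (Fin ℓ × Fin (n + 1)) k, F ≠ 0 ∧
    ∀ M : Fin ℓ → Fin (n + 1) → k, MvPolynomial.eval (fun p => M p.1 p.2) F ≠ 0 → Q M

/-- Castelnuovo–Mumford regularity bound `reg(I) ≤ m`, via the Bayer–Stillman criterion:
there are linear forms `h_1, …, h_j` such that
`((I + (h_1,…,h_{i-1})) : h_i)_t = (I + (h_1,…,h_{i-1}))_t` for all `t ≥ m` and all `i`, and
`(I + (h_1,…,h_j))_t = R_t` for all `t ≥ m`. -/
def RegLE {k : Type} [Field k] {n : ℕ} (I : Ideal (PR k n)) (m : ℕ) : Prop :=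
  ∃ (j : ℕ) (h : Fin j → PR k n),
    (∀ i, (h i).IsHomogeneous 1) ∧
    (∀ i : Fin j, ∀ t, m ≤ t →
      idealComp (Submodule.colon (I ⊔ Ideal.span (h '' {i' | i' < i})) ((Ideal.span {h i} : Ideal (PR k n)) : Set (PR k n))) t =
        idealComp (I ⊔ Ideal.span (h '' {i' | i' < i})) t) ∧
    (∀ t, m ≤ t →
      idealComp (I ⊔ Ideal.span (Set.range h)) t = homogeneousSubmodule (Fin (n + 1)) k t)

lemma maxBinom_eq {c d m : ℕ} (h1 : Nat.choose m d ≤ c) (h2 : c < Nat.choose (m + 1) d)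
    (h3 : m ≤ c + d) : maxBinom c d = m := by
  refine le_antisymm ?_ (Nat.le_findGreatest h3 h1)
  by_contra hlt
  push_neg at hlt
  have hg : Nat.choose (maxBinom c d) d ≤ c :=
    Nat.findGreatest_spec (P := fun m => Nat.choose m d ≤ c) h3 h1
  have : Nat.choose (m + 1) d ≤ Nat.choose (maxBinom c d) d :=
    Nat.choose_le_choose d hlt
  omega

lemma maxBinom_of_le {c d : ℕ} (hc : 1 ≤ c) (hcd : c ≤ d) : maxBinom c d = d := by
  refine maxBinom_eq ?_ ?_ (Nat.le_add_left d c)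
  · simpa [Nat.choose_self] using hc
  · rw [Nat.choose_succ_self_right]; omega

lemma maxBinom_succ {t : ℕ} (ht : 1 ≤ t) : maxBinom (t + 1) t = t + 1 := by
  refine maxBinom_eq ?_ ?_ (by omega)
  · rw [Nat.choose_succ_self_right]
  · have hs : Nat.choose (t + 1 + 1) t = Nat.choose (t + 1 + 1) 2 := by
      rw [← Nat.choose_symm (show t ≤ t + 1 + 1 by omega)]
      congr 1
      omega
    have hp : Nat.choose (t + 1 + 1) 2 = Nat.choose (t + 1) 1 + Nat.choose (t + 1) 2 :=
      Nat.choose_succ_succ (t + 1) 1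
    have h1 : Nat.choose (t + 1) 1 = t + 1 := Nat.choose_one_right _
    have h2 : 0 < Nat.choose (t + 1) 2 := Nat.choose_pos (by omega)
    omega

lemma macaulayFun_of_le : ∀ c d : ℕ, c ≤ d → macaulayFun c d = c := by
  intro c
  induction c with
  | zero => intro d _; rw [macaulayFun]; simp
  | succ m ih =>
    intro d hcd
    have hd : d ≠ 0 := by omega
    rw [macaulayFun, dif_neg (by omega)]
    rw [maxBinom_of_le (by omega) hcd, Nat.choose_self, Nat.choose_self]
    have : m + 1 - 1 = m := rfl
    rw [this, ih (d - 1) (by omega)]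
    omega

lemma greenFun_of_le : ∀ c d : ℕ, c ≤ d → greenFun c d = 0 := by
  intro c
  induction c with
  | zero => intro d _; rw [greenFun]; simp
  | succ m ih =>
    intro d hcd
    rw [greenFun, dif_neg (by omega)]
    rw [maxBinom_of_le (by omega) hcd, Nat.choose_self]
    have hz : Nat.choose (d - 1) d = 0 := Nat.choose_eq_zero_of_lt (by omega)
    have : m + 1 - 1 = m := rfl
    rw [hz, this, ih (d - 1) (by omega)]

lemma macaulayFun_succ {t : ℕ} (ht : 1 ≤ t) : macaulayFun (t + 1) t = t + 2 := by
  rw [macaulayFun, dif_neg (by omega), maxBinom_succ ht, Nat.choose_succ_self_right,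
    Nat.choose_succ_self_right]
  simp [macaulayFun]

lemma greenFun_succ {t : ℕ} (ht : 1 ≤ t) : greenFun (t + 1) t = 1 := by
  rw [greenFun, dif_neg (by omega), maxBinom_succ ht, Nat.choose_succ_self_right]
  simp [greenFun, Nat.choose_self]

section Geo

variable {k : Type} [Field k] {n d : ℕ}

/-- Evaluation at the points `v j`, as a linear map. -/
noncomputable def Ev (v : Fin d → Fin (n + 1) → k) : PR k n →ₗ[k] (Fin d → k) :=
  LinearMap.pi fun j => (aeval (v j)).toLinearMap

@[simp] lemma Ev_apply (v : Fin d → Fin (n + 1) → k) (f : PR k n) (j : Fin d) :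
    Ev v f j = eval (v j) f := by
  have : (aeval (v j)) f = eval (v j) f := by
    rw [← coe_aeval_eq_eval]; rfl
  simpa [Ev] using this

lemma eval_smul_of_homog {f : PR k n} {t : ℕ} (hf : f.IsHomogeneous t) (s : k)
    (x : Fin (n + 1) → k) : eval (s • x) f = s ^ t * eval x f := by
  rw [eval_eq', eval_eq', Finset.mul_sum]
  refine Finset.sum_congr rfl fun α hα => ?_
  have hdeg : ∑ i, α i = t := by
    have h1 : Finsupp.weight 1 α = t := hf (mem_support_iff.mp hα)
    have h2 : α.degree = Finsupp.weight 1 α := by rw [Finsupp.degree_eq_weight_one]; rfl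
    have h3 : α.degree = ∑ i ∈ α.support, α i := rfl
    have h4 : ∑ i, α i = ∑ i ∈ α.support, α i :=
      (Finset.sum_subset (Finset.subset_univ _) (fun i _ hi => by
        simpa using Finsupp.notMem_support_iff.mp hi)).symm
    omega
  have : ∏ i, (s • x) i ^ α i = s ^ t * ∏ i, x i ^ α i := by
    simp only [Pi.smul_apply, smul_eq_mul, mul_pow]
    rw [Finset.prod_mul_distrib, Finset.prod_pow_eq_pow_sum, hdeg]
  rw [this]; ring

end Geo

section Geo2
variable {k : Type} [Field k] {n d : ℕ}

instance homogFD (t : ℕ) : FiniteDimensional k ↥(homogeneousSubmodule (Fin (n + 1)) k t) := by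
  have hle : homogeneousSubmodule (Fin (n + 1)) k t ≤ restrictTotalDegree (Fin (n + 1)) k t := by
    intro f hf
    rw [mem_restrictTotalDegree]
    exact ((mem_homogeneousSubmodule _ _).mp hf).totalDegree_le
  exact Submodule.finiteDimensional_of_le hle

/-- Evaluation restricted to the degree-`t` component. -/
noncomputable def evRes (v : Fin d → Fin (n + 1) → k) (t : ℕ) :
    ↥(homogeneousSubmodule (Fin (n + 1)) k t) →ₗ[k] (Fin d → k) :=
  (Ev v).comp (homogeneousSubmodule (Fin (n + 1)) k t).subtype

lemma map_ker_evRes (v : Fin d → Fin (n + 1) → k) (t : ℕ) :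
    Submodule.map (homogeneousSubmodule (Fin (n + 1)) k t).subtype
        (LinearMap.ker (evRes v t)) =
      idealComp (vanishIdeal (coneOver v Set.univ)) t := by
  ext f
  simp only [Submodule.mem_map, LinearMap.mem_ker, idealComp, Submodule.mem_inf,
    Submodule.restrictScalars_mem]
  constructor
  · rintro ⟨⟨g, hg⟩, hker, rfl⟩
    refine ⟨?_, hg⟩
    intro x hx
    obtain ⟨j, -, s, rfl⟩ := hx
    have hfj : eval (v j) g = 0 := by
      have := congrFun hker j
      simpa [evRes] using this
    show eval (s • v j) g = 0
    rw [eval_smul_of_homog ((mem_homogeneousSubmodule _ _).mp hg) s (v j), hfj, mul_zero]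
  · rintro ⟨hvan, hg⟩
    refine ⟨⟨f, hg⟩, ?_, rfl⟩
    funext j
    have : eval (v j) f = 0 := by
      apply hvan
      exact ⟨j, Set.mem_univ _, 1, (one_smul k (v j)).symm⟩
    simpa [evRes] using this

lemma hilb_eq_finrank_range (v : Fin d → Fin (n + 1) → k) (t : ℕ) :
    hilb (vanishIdeal (coneOver v Set.univ)) t =
      Module.finrank k ↥(LinearMap.range (evRes v t)) := by
  have hker : Module.finrank k ↥(idealComp (vanishIdeal (coneOver v Set.univ)) t) =
      Module.finrank k ↥(LinearMap.ker (evRes v t)) := by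
    rw [← map_ker_evRes v t, Submodule.finrank_map_subtype_eq]
  have hrn := LinearMap.finrank_range_add_finrank_ker (evRes v t)
  have hkerle : Module.finrank k ↥(LinearMap.ker (evRes v t)) ≤
      Module.finrank k ↥(homogeneousSubmodule (Fin (n + 1)) k t) :=
    Submodule.finrank_le _
  rw [hilb, hker]
  omega

end Geo2

section Geo3
variable {k : Type} [Field k] {n d : ℕ}

lemma eval_linForm (z x : Fin (n + 1) → k) :
    eval x (linForm z) = ∑ j, z j * x j := by
  simp [linForm]

lemma linForm_isHomogeneous (z : Fin (n + 1) → k) : (linForm z).IsHomogeneous 1 := by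
  apply IsHomogeneous.sum
  intro i _
  exact isHomogeneous_C_mul_X _ _

lemma exists_linForm_sep {m : ℕ} (w : Fin m → (Fin (n + 1) → k)) (x : Fin (n + 1) → k)
    (hx : x ∉ Submodule.span k (Set.range w)) :
    ∃ z : Fin (n + 1) → k, (∀ i, eval (w i) (linForm z) = 0) ∧ eval x (linForm z) ≠ 0 := by
  set W := Submodule.span k (Set.range w)
  have hxq : (W.mkQ x) ≠ 0 := by
    simpa [Submodule.mkQ_apply, Submodule.Quotient.mk_eq_zero] using hx
  have : ¬ ∀ φ : Module.Dual k ((Fin (n + 1) → k) ⧸ W), φ (W.mkQ x) = 0 := by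
    rw [Module.forall_dual_apply_eq_zero_iff]
    exact hxq
  push_neg at this
  obtain ⟨φ, hφ⟩ := this
  set lam : (Fin (n + 1) → k) →ₗ[k] k := φ.comp W.mkQ with hlam
  have hlam_eval : ∀ y : Fin (n + 1) → k, eval y (linForm (fun j => lam (fun i => if j = i then 1 else 0))) = lam y := by
    intro y
    rw [eval_linForm]
    rw [LinearMap.pi_apply_eq_sum_univ lam y]
    refine Finset.sum_congr rfl fun j _ => ?_
    rw [smul_eq_mul, mul_comm]
  refine ⟨fun j => lam (fun i => if j = i then 1 else 0), ?_, ?_⟩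
  · intro i
    rw [hlam_eval]
    have : w i ∈ W := Submodule.subset_span (Set.mem_range_self i)
    simp [hlam, Submodule.mkQ_apply, (Submodule.Quotient.mk_eq_zero W).mpr this]
  · rw [hlam_eval]
    simpa [hlam] using hφ

lemma le_finrank_range_of_sep (v : Fin d → Fin (n + 1) → k) {m t : ℕ}
    (ι : Fin m → Fin d) (hι : Function.Injective ι)
    (g : Fin m → PR k n) (hhom : ∀ i, (g i).IsHomogeneous t)
    (hdiag : ∀ i, eval (v (ι i)) (g i) ≠ 0)
    (hoff : ∀ i l, l ≠ i → eval (v (ι l)) (g i) = 0) :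
    m ≤ Module.finrank k ↥(LinearMap.range (evRes v t)) := by
  have hmem : ∀ i, Ev v (g i) ∈ LinearMap.range (evRes v t) := by
    intro i
    exact ⟨⟨g i, (mem_homogeneousSubmodule _ _).mpr (hhom i)⟩, rfl⟩
  set u : Fin m → ↥(LinearMap.range (evRes v t)) := fun i => ⟨Ev v (g i), hmem i⟩ with hu
  have hli : LinearIndependent k u := by
    apply LinearIndependent.of_comp (LinearMap.range (evRes v t)).subtype
    rw [Fintype.linearIndependent_iff]
    intro c hc i
    have := congrFun hc (ι i)
    simp only [Finset.sum_apply, Pi.smul_apply, Function.comp_apply, Submodule.coe_subtype,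
      Pi.zero_apply, smul_eq_mul, hu, Ev_apply] at this
    rw [Finset.sum_eq_single i] at this
    · rcases mul_eq_zero.mp this with h | h
      · exact h
      · exact absurd h (hdiag i)
    · intro l _ hl
      rw [hoff l i (Ne.symm hl), mul_zero]
    · intro h
      exact absurd (Finset.mem_univ i) h
  simpa using hli.fintype_card_le_finrank

end Geo3

section Geo4
variable {k : Type} [Field k] {n d : ℕ}

lemma hilb_le_d (v : Fin d → Fin (n + 1) → k) (t : ℕ) :
    hilb (vanishIdeal (coneOver v Set.univ)) t ≤ d := by
  rw [hilb_eq_finrank_range]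
  have h1 : Module.finrank k ↥(LinearMap.range (evRes v t)) ≤
      Module.finrank k (Fin d → k) := Submodule.finrank_le _
  simpa [Module.finrank_fin_fun] using h1

lemma min_le_hilb (v : Fin d → Fin (n + 1) → k) (hd : 0 < d) (hv0 : ∀ j, v j ≠ 0)
    (hdist : ∀ i j, i ≠ j → ∀ s : k, v i ≠ s • v j) (t : ℕ) :
    min (t + 1) d ≤ hilb (vanishIdeal (coneOver v Set.univ)) t := by
  rw [hilb_eq_finrank_range]
  set m := min (t + 1) d with hm
  have hmd : m ≤ d := min_le_right _ _
  have hmt : m ≤ t + 1 := min_le_left _ _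
  have hm1 : 1 ≤ m := by omega
  set ι : Fin m → Fin d := Fin.castLE hmd with hι
  have hιinj : Function.Injective ι := Fin.castLE_injective hmd
  -- separating linear forms for pairs
  have hz : ∀ i l : Fin m, ∃ z : Fin (n + 1) → k,
      i ≠ l → (eval (v (ι l)) (linForm z) = 0 ∧ eval (v (ι i)) (linForm z) ≠ 0) := by
    intro i l
    by_cases hil : i = l
    · exact ⟨0, fun h => absurd hil h⟩
    · have hns : v (ι i) ∉ Submodule.span k (Set.range (fun _ : Fin 1 => v (ι l))) := by
        rw [Set.range_const]
        intro hmem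
        obtain ⟨a, ha⟩ := Submodule.mem_span_singleton.mp hmem
        exact hdist (ι i) (ι l) (fun h => hil (hιinj h)) a ha.symm
      obtain ⟨z, hz1, hz2⟩ := exists_linForm_sep (fun _ : Fin 1 => v (ι l)) (v (ι i)) hns
      exact ⟨z, fun _ => ⟨hz1 0, hz2⟩⟩
  choose z hzspec using hz
  have hy : ∀ i : Fin m, ∃ y : Fin (n + 1) → k, eval (v (ι i)) (linForm y) ≠ 0 := by
    intro i
    have hns : v (ι i) ∉ Submodule.span k (Set.range (fun x : Fin 0 => (x.elim0 : Fin (n + 1) → k))) := by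
      have hre : Set.range (fun x : Fin 0 => (x.elim0 : Fin (n + 1) → k)) = ∅ := by
        simp
      rw [hre, Submodule.span_empty, Submodule.mem_bot]
      exact hv0 _
    obtain ⟨y, _, hy2⟩ := exists_linForm_sep (fun x : Fin 0 => x.elim0) (v (ι i)) hns
    exact ⟨y, hy2⟩
  choose y hyspec using hy
  set g : Fin m → PR k n := fun i =>
    (∏ l ∈ Finset.univ.erase i, linForm (z i l)) * linForm (y i) ^ (t + 1 - m) with hg
  have hcard : ∀ i : Fin m, (Finset.univ.erase i).card = m - 1 := by
    intro i
    rw [Finset.card_erase_of_mem (Finset.mem_univ i), Finset.card_univ, Fintype.card_fin]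
  have hhom : ∀ i, (g i).IsHomogeneous t := by
    intro i
    have hprod : (∏ l ∈ Finset.univ.erase i, linForm (z i l)).IsHomogeneous
        (∑ _l ∈ Finset.univ.erase i, 1) :=
      IsHomogeneous.prod _ _ _ (fun l _ => linForm_isHomogeneous _)
    have hpow : ((linForm (y i)) ^ (t + 1 - m)).IsHomogeneous (1 * (t + 1 - m)) :=
      (linForm_isHomogeneous _).pow _
    have := hprod.mul hpow
    have harith : (∑ _l ∈ Finset.univ.erase i, (1:ℕ)) + 1 * (t + 1 - m) = t := by
      rw [Finset.sum_const, hcard i, smul_eq_mul]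
      omega
    rwa [harith] at this
  have hdiag : ∀ i, eval (v (ι i)) (g i) ≠ 0 := by
    intro i
    rw [hg]
    simp only [map_mul, map_prod, map_pow]
    apply mul_ne_zero
    · rw [Finset.prod_ne_zero_iff]
      intro l hl
      exact ((hzspec i l (Finset.mem_erase.mp hl).1.symm).2)
    · exact pow_ne_zero _ (hyspec i)
  have hoff : ∀ i l, l ≠ i → eval (v (ι l)) (g i) = 0 := by
    intro i l hli
    rw [hg]
    simp only [map_mul, map_prod, map_pow]
    rw [Finset.prod_eq_zero (Finset.mem_erase.mpr ⟨hli, Finset.mem_univ l⟩)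
      ((hzspec i l (Ne.symm hli)).1)]
    rw [zero_mul]
  exact le_finrank_range_of_sep v ι hιinj g hhom hdiag hoff

end Geo4

section Geo5
variable {k : Type} [Field k] {n d : ℕ}

lemma homog_support_sum {σ : Type} [Fintype σ] {f : MvPolynomial σ k} {t : ℕ}
    (hf : f.IsHomogeneous t) {α : σ →₀ ℕ} (hα : coeff α f ≠ 0) : ∑ i, α i = t := by
  have h1 : Finsupp.weight 1 α = t := hf hα
  have h2 : α.degree = Finsupp.weight 1 α := by rw [Finsupp.degree_eq_weight_one]; rfl
  have h3 : α.degree = ∑ i ∈ α.support, α i := rfl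
  have h4 : ∑ i, α i = ∑ i ∈ α.support, α i :=
    (Finset.sum_subset (Finset.subset_univ _) (fun i _ hi => by
      simpa using Finsupp.notMem_support_iff.mp hi)).symm
  omega

lemma hilb_le_collinear (v : Fin d → Fin (n + 1) → k) (w₀ w₁ : Fin (n + 1) → k)
    (a b : Fin d → k) (hab : ∀ j, v j = a j • w₀ + b j • w₁) (t : ℕ) :
    hilb (vanishIdeal (coneOver v Set.univ)) t ≤ t + 1 := by
  rw [hilb_eq_finrank_range]
  set fam : Fin (t + 1) → (Fin d → k) :=
    fun i => fun j => a j ^ (i : ℕ) * b j ^ (t - (i : ℕ)) with hfam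
  have hsub : LinearMap.range (evRes v t) ≤ Submodule.span k (Set.range fam) := by
    rintro x ⟨⟨f, hf⟩, rfl⟩
    show Ev v f ∈ Submodule.span k (Set.range fam)
    set p : Fin (n + 1) → MvPolynomial (Fin 2) k :=
      fun r => C (w₀ r) * X 0 + C (w₁ r) * X 1 with hp
    have hp1 : ∀ r, (p r).IsHomogeneous 1 :=
      fun r => (isHomogeneous_C_mul_X _ _).add (isHomogeneous_C_mul_X _ _)
    set g : MvPolynomial (Fin 2) k := aeval p f with hgdef
    have hg : g.IsHomogeneous t := by
      simpa [hgdef] using ((mem_homogeneousSubmodule _ _).mp hf).aeval p hp1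
    have hev : ∀ j, eval (v j) f = eval ![a j, b j] g := by
      intro j
      rw [hgdef, aeval_def, algebraMap_eq, eval_eval₂]
      have hcomp : (eval ![a j, b j]).comp (C (σ := Fin 2)) = RingHom.id k := by
        ext c
        simp
      rw [hcomp]
      have hpt : (fun s => eval ![a j, b j] (p s)) = v j := by
        funext s
        rw [hab j]
        simp [hp]
        ring
      rw [hpt]
      rfl
    have hEv : Ev v f = ∑ α ∈ g.support, (coeff α g) •
        (fun j => a j ^ α 0 * b j ^ α 1 : Fin d → k) := by
      funext j
      rw [Ev_apply, hev j, eval_eq']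
      rw [Finset.sum_apply]
      refine Finset.sum_congr rfl fun α _ => ?_
      simp [Fin.prod_univ_two]
    rw [hEv]
    refine Submodule.sum_mem _ fun α hα => Submodule.smul_mem _ _ (Submodule.subset_span ?_)
    have hsum : α 0 + α 1 = t := by
      have := homog_support_sum hg (mem_support_iff.mp hα)
      simpa [Fin.sum_univ_two] using this
    refine ⟨⟨α 0, by omega⟩, ?_⟩
    funext j
    simp only [hfam]
    congr 1
    congr 1
    omega
  have h1 : Module.finrank k ↥(LinearMap.range (evRes v t)) ≤
      Module.finrank k ↥(Submodule.span k (Set.range fam)) :=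
    Submodule.finrank_mono hsub
  have h2 := finrank_range_le_card (R := k) fam
  simp only [Set.finrank] at h2
  simpa using le_trans h1 h2

lemma hilb_collinear (v : Fin d → Fin (n + 1) → k) (hd : 0 < d) (hv0 : ∀ j, v j ≠ 0)
    (hdist : ∀ i j, i ≠ j → ∀ s : k, v i ≠ s • v j)
    (w₀ w₁ : Fin (n + 1) → k) (a b : Fin d → k) (hab : ∀ j, v j = a j • w₀ + b j • w₁)
    (t : ℕ) : hilb (vanishIdeal (coneOver v Set.univ)) t = min (t + 1) d := by
  refine le_antisymm (le_min (hilb_le_collinear v w₀ w₁ a b hab t) (hilb_le_d v t)) ?_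
  exact min_le_hilb v hd hv0 hdist t

end Geo5

section Geo6
variable {k : Type} [Field k] {n d : ℕ}

lemma three_le_hilb_one (v : Fin d → Fin (n + 1) → k) (hd : 2 ≤ d)
    (hdist : ∀ i j, i ≠ j → ∀ s : k, v i ≠ s • v j)
    (hnc : ¬ ∃ w₀ w₁ : Fin (n + 1) → k, ∀ j, ∃ s t : k, v j = s • w₀ + t • w₁) :
    3 ≤ hilb (vanishIdeal (coneOver v Set.univ)) 1 := by
  push_neg at hnc
  set j0 : Fin d := ⟨0, by omega⟩ with hj0
  set j1 : Fin d := ⟨1, by omega⟩ with hj1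
  obtain ⟨j, hj⟩ := hnc (v j0) (v j1)
  have hjne0 : j ≠ j0 := by
    intro h
    exact hj 1 0 (by rw [h]; simp)
  have hjne1 : j ≠ j1 := by
    intro h
    exact hj 0 1 (by rw [h]; simp)
  have hj01 : j0 ≠ j1 := by
    intro h
    simpa [hj0, hj1, Fin.ext_iff] using h
  -- the three nonmembership facts
  have s2 : v j ∉ Submodule.span k {v j0, v j1} := by
    intro hmem
    obtain ⟨a, b, hab⟩ := Submodule.mem_span_pair.mp hmem
    exact hj a b hab.symm
  have s0 : v j0 ∉ Submodule.span k {v j1, v j} := by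
    intro hmem
    obtain ⟨a, b, hab⟩ := Submodule.mem_span_pair.mp hmem
    by_cases hb : b = 0
    · rw [hb, zero_smul, add_zero] at hab
      exact hdist j0 j1 hj01 a hab.symm
    · apply hj (b⁻¹) (-(b⁻¹ * a))
      have h1 : b • v j = v j0 - a • v j1 := by
        rw [← hab]; abel
      have h2 : v j = b⁻¹ • (v j0 - a • v j1) := by
        rw [← h1, smul_smul, inv_mul_cancel₀ hb, one_smul]
      rw [h2, smul_sub, smul_smul, neg_smul]
      abel
  have s1 : v j1 ∉ Submodule.span k {v j0, v j} := by
    intro hmem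
    obtain ⟨a, b, hab⟩ := Submodule.mem_span_pair.mp hmem
    by_cases hb : b = 0
    · rw [hb, zero_smul, add_zero] at hab
      exact hdist j1 j0 (Ne.symm hj01) a hab.symm
    · apply hj (-(b⁻¹ * a)) (b⁻¹)
      have h1 : b • v j = v j1 - a • v j0 := by
        rw [← hab]; abel
      have h2 : v j = b⁻¹ • (v j1 - a • v j0) := by
        rw [← h1, smul_smul, inv_mul_cancel₀ hb, one_smul]
      rw [h2, smul_sub, smul_smul, neg_smul]
      abel
  -- selection of the three points
  set P : Fin 3 → Fin d := ![j0, j1, j] with hP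
  have hPinj : Function.Injective P := by
    intro x y hxy
    fin_cases x <;> fin_cases y <;>
      simp only [hP, Matrix.cons_val_zero, Matrix.cons_val_one, Matrix.head_cons,
        Matrix.cons_val_two, Matrix.tail_cons] at hxy <;>
      first
        | rfl
        | exact absurd hxy hj01
        | exact absurd hxy (Ne.symm hj01)
        | exact absurd hxy hjne0
        | exact absurd hxy (Ne.symm hjne0)
        | exact absurd hxy hjne1
        | exact absurd hxy (Ne.symm hjne1)
  -- separating linear forms
  have hrange : ∀ u w : Fin (n + 1) → k, Set.range ![u, w] = {u, w} := by
    intro u w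
    simp only [Matrix.range_cons, Matrix.range_empty, Set.union_empty, Set.union_singleton]
    exact Set.pair_comm w u
  have hsep : ∀ i : Fin 3, ∃ z : Fin (n + 1) → k,
      eval (v (P i)) (linForm z) ≠ 0 ∧ ∀ l : Fin 3, l ≠ i → eval (v (P l)) (linForm z) = 0 := by
    intro i
    fin_cases i
    · obtain ⟨z, hz1, hz2⟩ := exists_linForm_sep ![v j1, v j] (v j0) (by rw [hrange]; exact s0)
      refine ⟨z, hz2, ?_⟩
      intro l hl
      fin_cases l
      · simp at hl
      · simpa [hP] using hz1 0
      · simpa [hP] using hz1 1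
    · obtain ⟨z, hz1, hz2⟩ := exists_linForm_sep ![v j0, v j] (v j1) (by rw [hrange]; exact s1)
      refine ⟨z, hz2, ?_⟩
      intro l hl
      fin_cases l
      · simpa [hP] using hz1 0
      · simp at hl
      · simpa [hP] using hz1 1
    · obtain ⟨z, hz1, hz2⟩ := exists_linForm_sep ![v j0, v j1] (v j) (by rw [hrange]; exact s2)
      refine ⟨z, hz2, ?_⟩
      intro l hl
      fin_cases l
      · simpa [hP] using hz1 0
      · simpa [hP] using hz1 1
      · simp at hl
  choose z hz1 hz2 using hsep
  rw [hilb_eq_finrank_range]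
  refine le_finrank_range_of_sep v P hPinj (fun i => linForm (z i))
    (fun i => linForm_isHomogeneous _) (fun i => hz1 i) ?_
  intro i l hl
  exact hz2 i l hl
end Geo6

/-- Let `X` be a reduced set of `d > 1` distinct points of `ℙⁿ` (`n ≥ 2`),
given by nonzero, pairwise non-proportional homogeneous coordinate vectors `v j`, with
(saturated homogeneous radical) ideal `I_X` the vanishing ideal of the affine cone over `X`.
Then the points of `X` are collinear iff `G(X) = d` and `M(X) = 1`. -/
theorem collinear_iff_Gnum_eq_card {k : Type} [Field k] [IsAlgClosed k] [CharZero k]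
    {n d : ℕ} (hn : 2 ≤ n) (hd : 1 < d)
    (v : Fin d → (Fin (n + 1) → k)) (hv0 : ∀ j, v j ≠ 0)
    (hdist : ∀ i j, i ≠ j → ∀ t : k, v i ≠ t • v j)
    (I : Ideal (PR k n)) (hI : I = vanishIdeal (coneOver v Set.univ)) :
    (∃ w₀ w₁ : Fin (n + 1) → k, ∀ j, ∃ s t : k, v j = s • w₀ + t • w₁) ↔
      (Gnum I = d ∧ Mnum I = 1) := by
  subst hI
  set Iv := vanishIdeal (coneOver v Set.univ) with hIv
  constructor
  · rintro ⟨w₀, w₁, hw⟩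
    choose a b hab using hw
    have hH : ∀ t, hilb Iv t = min (t + 1) d :=
      hilb_collinear v (by omega) hv0 hdist w₀ w₁ a b hab
    constructor
    · -- Gnum
      have hdmem : d ∈ {e : ℕ | 1 ≤ e ∧ ∀ t ≥ e, hilb Iv (t + 1) = macaulayFun (hilb Iv t) t} := by
        refine ⟨by omega, fun t ht => ?_⟩
        rw [hH, hH]
        have h1 : min (t + 1) d = d := by omega
        have h2 : min (t + 1 + 1) d = d := by omega
        rw [h1, h2, macaulayFun_of_le d t (by omega)]
      have hlow : ∀ e ∈ {e : ℕ | 1 ≤ e ∧ ∀ t ≥ e, hilb Iv (t + 1) = macaulayFun (hilb Iv t) t},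
          d ≤ e := by
        rintro e ⟨he1, he2⟩
        by_contra hlt
        push_neg at hlt
        have := he2 (d - 1) (by omega)
        rw [hH, hH] at this
        have h1 : min (d - 1 + 1) d = (d - 1) + 1 := by omega
        have h2 : min (d - 1 + 1 + 1) d = d := by omega
        rw [h1, h2, macaulayFun_succ (by omega)] at this
        omega
      rw [Gnum]
      exact le_antisymm (Nat.sInf_le hdmem) (hlow _ (Nat.sInf_mem ⟨d, hdmem⟩))
    · -- Mnum
      have h1mem : 1 ∈ {e : ℕ | 1 ≤ e ∧ ∀ t ≥ e, deltaH Iv t = greenFun (hilb Iv t) t} := by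
        refine ⟨le_refl 1, fun t ht => ?_⟩
        simp only [deltaH]
        by_cases htd : t < d
        · have ha : hilb Iv t = t + 1 := by rw [hH]; omega
          have hb : hilb Iv (t - 1) = t := by rw [hH]; omega
          rw [ha, hb, greenFun_succ (by omega)]
          omega
        · have ha : hilb Iv t = d := by rw [hH]; omega
          have hb : hilb Iv (t - 1) = d := by rw [hH]; omega
          rw [ha, hb, greenFun_of_le d t (by omega)]
          omega
      have hlow : ∀ e ∈ {e : ℕ | 1 ≤ e ∧ ∀ t ≥ e, deltaH Iv t = greenFun (hilb Iv t) t},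
          1 ≤ e := fun e he => he.1
      rw [Mnum]
      exact le_antisymm (Nat.sInf_le h1mem) (hlow _ (Nat.sInf_mem ⟨1, h1mem⟩))
  · rintro ⟨-, hM⟩
    by_contra hnc
    -- extract the Green condition from `Mnum = 1`
    have hS : ∀ t ≥ 1, deltaH Iv t = greenFun (hilb Iv t) t := by
      rw [Mnum] at hM
      have hne : {e : ℕ | 1 ≤ e ∧ ∀ t ≥ e, deltaH Iv t = greenFun (hilb Iv t) t}.Nonempty := by
        by_contra hempty
        rw [Set.not_nonempty_iff_eq_empty] at hempty
        rw [hempty, Nat.sInf_empty] at hM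
        omega
      have := Nat.sInf_mem hne
      rw [hM] at this
      exact this.2
    have hd1 : hilb Iv (d - 1) = d := by
      have hge := min_le_hilb v (by omega) hv0 hdist (d - 1)
      have hle := hilb_le_d v (d - 1)
      rw [← hIv] at hge hle
      have : min (d - 1 + 1) d = d := by omega
      omega
    have hchain : ∀ m, m ≤ d - 2 → hilb Iv (d - 1 - m) = d - m := by
      intro m
      induction m with
      | zero => intro _; simpa using hd1
      | succ p ih =>
        intro hp
        have hprev := ih (by omega)
        set t := d - 1 - p with hts
        have ht1 : 1 ≤ t := by omega
        have hgr := hS t ht1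
        simp only [deltaH] at hgr
        rw [hprev] at hgr
        have hdp : d - p = t + 1 := by omega
        rw [hdp, greenFun_succ ht1] at hgr
        have : t - 1 = d - 1 - (p + 1) := by omega
        rw [this] at hgr
        omega
    have h1 : hilb Iv 1 = 2 := by
      have := hchain (d - 2) (le_refl _)
      have e1 : d - 1 - (d - 2) = 1 := by omega
      have e2 : d - (d - 2) = 2 := by omega
      rw [e1, e2] at this
      exact this
    have h3 := three_le_hilb_one v (by omega) hdist hnc
    rw [← hIv] at h3
    omega
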